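/- Let n ≥ 1 and let (μ_1, …, μ_{n+1}) be a random vector in ℝ^{n+1} whose joint law is invariant under every permutation of its n+1 coordinates, and assume that almost surely the values μ_1, …, μ_{n+1} are pairwise distinct. Then the random variable pl = (n+1)^{-1} #{i ∈ {1,…,n+1} : μ_i ≥ μ_{n+1}} is uniformly distributed on the finite set {1/(n+1), 2/(n+1), …, 1}; that is, P(pl = k/(n+1)) = 1/(n+1) for each k ∈ {1, …, n+1}. -/

import Mathlib

open MeasureTheory Finset
open scoped ENNReal

/-- The rank of coordinate `j` from the top: the number of coordinates `i` with `v j ≤ v i`. -/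
private noncomputable def rankF (n : ℕ) (v : Fin (n + 1) → ℝ) (j : Fin (n + 1)) : ℕ :=
  (univ.filter (fun i => v j ≤ v i)).card

private lemma rankF_eq_sum {n : ℕ} (v : Fin (n + 1) → ℝ) (j : Fin (n + 1)) :
    rankF n v j = ∑ i, if v j ≤ v i then 1 else 0 := by
  unfold rankF; rw [Finset.card_filter]

private lemma measurable_rankF {n : ℕ} (j : Fin (n + 1)) :
    Measurable (fun v : Fin (n + 1) → ℝ => rankF n v j) := by
  simp only [rankF_eq_sum]
  exact Finset.measurable_sum _ (fun i _ =>
    Measurable.ite (measurableSet_le (measurable_pi_apply j) (measurable_pi_apply i))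
      measurable_const measurable_const)

private lemma rankF_lt {n : ℕ} (v : Fin (n + 1) → ℝ) {j j' : Fin (n + 1)}
    (h : v j < v j') : rankF n v j' < rankF n v j := by
  apply Finset.card_lt_card
  rw [Finset.ssubset_iff_of_subset]
  · exact ⟨j, by simp, by simp [not_le.2 h]⟩
  · intro i hi
    simp only [Finset.mem_filter, Finset.mem_univ, true_and] at hi ⊢
    linarith

private lemma rankF_injective {n : ℕ} (v : Fin (n + 1) → ℝ) (hv : Function.Injective v) :
    Function.Injective (rankF n v) := by
  intro a b hab
  by_contra hne
  have hvne : v a ≠ v b := fun h => hne (hv h)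
  rcases hvne.lt_or_gt with h | h
  · exact absurd hab (Nat.ne_of_gt (rankF_lt v h))
  · exact absurd hab (Nat.ne_of_lt (rankF_lt v h))

private lemma rankF_pos {n : ℕ} (v : Fin (n + 1) → ℝ) (j : Fin (n + 1)) :
    1 ≤ rankF n v j :=
  Finset.card_pos.2 ⟨j, by simp [rankF]⟩

private lemma rankF_le {n : ℕ} (v : Fin (n + 1) → ℝ) (j : Fin (n + 1)) :
    rankF n v j ≤ n + 1 := by
  simpa [rankF] using (Finset.card_filter_le univ (fun i => v j ≤ v i)).trans (by simp)

private lemma rankF_existsUnique {n : ℕ} (v : Fin (n + 1) → ℝ) (hv : Function.Injective v)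
    (k : ℕ) (hk1 : 1 ≤ k) (hk2 : k ≤ n + 1) : ∃! j, rankF n v j = k := by
  have hinj := rankF_injective v hv
  have himg : univ.image (rankF n v) = Finset.Icc 1 (n + 1) := by
    apply Finset.eq_of_subset_of_card_le
    · intro x hx
      obtain ⟨j, _, rfl⟩ := Finset.mem_image.1 hx
      exact Finset.mem_Icc.2 ⟨rankF_pos v j, rankF_le v j⟩
    · rw [Nat.card_Icc, Finset.card_image_of_injective _ hinj, Finset.card_univ,
        Fintype.card_fin]
      omega
  have hk : k ∈ univ.image (rankF n v) := by
    rw [himg]; exact Finset.mem_Icc.2 ⟨hk1, hk2⟩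
  obtain ⟨j, _, hj⟩ := Finset.mem_image.1 hk
  exact ⟨j, hj, fun j' hj' => hinj (hj'.trans hj.symm)⟩

private lemma rankF_comp {n : ℕ} (v : Fin (n + 1) → ℝ) (σ : Equiv.Perm (Fin (n + 1)))
    (j : Fin (n + 1)) : rankF n (v ∘ σ) j = rankF n v (σ j) := by
  simp only [rankF_eq_sum, Function.comp]
  exact Equiv.sum_comp σ (fun i => if v (σ j) ≤ v i then 1 else 0)

/-- If `(μ_1, …, μ_{n+1})` is exchangeable and almost surely has pairwise
distinct coordinates, then the plausibility `pl = (n+1)⁻¹ #{i : μ_i ≥ μ_{n+1}}` is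
uniformly distributed on `{1/(n+1), …, 1}`: `P(pl = k/(n+1)) = 1/(n+1)` for `1 ≤ k ≤ n+1`. -/
theorem conformal_plausibility_uniform {Ω : Type*} [MeasurableSpace Ω]
    (ℙ : Measure Ω) [IsProbabilityMeasure ℙ]
    (n : ℕ) (hn : 1 ≤ n) (μ : Ω → Fin (n + 1) → ℝ) (hμ : Measurable μ)
    (hexch : ∀ σ : Equiv.Perm (Fin (n + 1)),
      Measure.map (fun ω => μ ω ∘ σ) ℙ = Measure.map μ ℙ)
    (hdist : ∀ᵐ ω ∂ℙ, Function.Injective (μ ω))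
    (k : ℕ) (hk1 : 1 ≤ k) (hk2 : k ≤ n + 1) :
    ℙ {ω | ((univ.filter (fun i : Fin (n + 1) => μ ω (Fin.last n) ≤ μ ω i)).card : ℝ) / (n + 1)
        = (k : ℝ) / (n + 1)} = 1 / (n + 1) := by
  -- rewrite the event in terms of the rank
  have hne : ((n : ℝ) + 1) ≠ 0 := by positivity
  have hset : {ω | ((univ.filter (fun i : Fin (n + 1) => μ ω (Fin.last n) ≤ μ ω i)).card : ℝ)
      / (n + 1) = (k : ℝ) / (n + 1)} = {ω | rankF n (μ ω) (Fin.last n) = k} := by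
    ext ω
    simp only [Set.mem_setOf_eq, div_eq_div_iff hne hne, rankF]
    constructor
    · intro h
      have h2 : ((univ.filter (fun i : Fin (n + 1) => μ ω (Fin.last n) ≤ μ ω i)).card : ℝ)
          = (k : ℝ) := mul_right_cancel₀ hne h
      exact Nat.cast_injective h2
    · intro h
      rw [h]
  rw [hset]
  -- the rank events
  set A : Fin (n + 1) → Set Ω := fun j => {ω | rankF n (μ ω) j = k} with hA
  have hAmeas : ∀ j, MeasurableSet (A j) := fun j =>
    ((measurable_rankF j).comp hμ) (measurableSet_singleton k)
  -- all rank events have the same probability by exchangeability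
  have hAeq : ∀ j, ℙ (A j) = ℙ (A (Fin.last n)) := by
    intro j
    set σ := Equiv.swap j (Fin.last n) with hσ
    have hmeasB : MeasurableSet ((fun v : Fin (n + 1) → ℝ => rankF n v (Fin.last n)) ⁻¹' {k}) :=
      (measurable_rankF (Fin.last n)) (measurableSet_singleton k)
    have hmeasσ : Measurable (fun ω => μ ω ∘ σ) :=
      measurable_pi_iff.2 fun i => (measurable_pi_apply (σ i)).comp hμ
    have hmap := congrArg (fun m : Measure (Fin (n + 1) → ℝ) =>
      m ((fun v : Fin (n + 1) → ℝ => rankF n v (Fin.last n)) ⁻¹' {k})) (hexch σ)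
    simp only [Measure.map_apply hmeasσ hmeasB, Measure.map_apply hμ hmeasB] at hmap
    have h1 : (fun ω => μ ω ∘ σ) ⁻¹' ((fun v : Fin (n + 1) → ℝ =>
        rankF n v (Fin.last n)) ⁻¹' {k}) = A j := by
      ext ω
      simp only [Set.mem_preimage, Set.mem_singleton_iff, hA, Set.mem_setOf_eq,
        rankF_comp, hσ, Equiv.swap_apply_right]
    have h2 : μ ⁻¹' ((fun v : Fin (n + 1) → ℝ => rankF n v (Fin.last n)) ⁻¹' {k})
        = A (Fin.last n) := rfl
    rw [h1, h2] at hmap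
    exact hmap
  -- the injectivity event
  set E : Set Ω := {ω | Function.Injective (μ ω)} with hE
  have hEmeas : MeasurableSet E := by
    have : E = ⋂ (a : Fin (n + 1)) (b : Fin (n + 1)) (_ : a ≠ b), {ω | μ ω a ≠ μ ω b} := by
      ext ω
      simp only [hE, Set.mem_setOf_eq, Set.mem_iInter, Function.Injective]
      constructor
      · intro h a b hab hEq; exact hab (h hEq)
      · intro h a b hEq; by_contra hab; exact h a b hab hEq
    rw [this]
    refine MeasurableSet.iInter fun a => MeasurableSet.iInter fun b =>
      MeasurableSet.iInter fun _ => ?_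
    exact (measurableSet_eq_fun ((measurable_pi_apply a).comp hμ)
      ((measurable_pi_apply b).comp hμ)).compl
  have hEc : ℙ Eᶜ = 0 := by
    have := ae_iff.mp hdist
    simpa [hE, Set.compl_setOf] using this
  have hE1 : ℙ E = 1 := (prob_compl_eq_zero_iff hEmeas).1 hEc
  -- partition of E by the rank events
  set C : Fin (n + 1) → Set Ω := fun j => A j ∩ E with hC
  have hCmeas : ∀ j, MeasurableSet (C j) := fun j => (hAmeas j).inter hEmeas
  have hCdisj : Pairwise (Function.onFun Disjoint C) := by
    intro a b hab
    rw [Function.onFun, Set.disjoint_left]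
    rintro ω ⟨ha, hEω⟩ ⟨hb, _⟩
    obtain ⟨j, _, huniq⟩ := rankF_existsUnique (μ ω) hEω k hk1 hk2
    exact hab ((huniq a ha).trans (huniq b hb).symm)
  have hCunion : (⋃ j, C j) = E := by
    ext ω
    simp only [Set.mem_iUnion, hC, Set.mem_inter_iff]
    constructor
    · rintro ⟨j, _, hEω⟩; exact hEω
    · intro hEω
      obtain ⟨j, hj, -⟩ := rankF_existsUnique (μ ω) hEω k hk1 hk2
      exact ⟨j, hj, hEω⟩
  have hsum : ∑' j : Fin (n + 1), ℙ (C j) = 1 := by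
    rw [← measure_iUnion hCdisj hCmeas, hCunion, hE1]
  have hCA : ∀ j, ℙ (C j) = ℙ (A j) := by
    intro j
    refine le_antisymm (measure_mono Set.inter_subset_left) ?_
    calc ℙ (A j) ≤ ℙ (C j ∪ Eᶜ) := measure_mono (by
          intro ω hω
          by_cases hEω : ω ∈ E
          · exact Or.inl ⟨hω, hEω⟩
          · exact Or.inr hEω)
      _ ≤ ℙ (C j) + ℙ Eᶜ := measure_union_le _ _
      _ = ℙ (C j) := by rw [hEc, add_zero]
  have hfin : ∑ j : Fin (n + 1), ℙ (A (Fin.last n)) = 1 := by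
    rw [← hsum, tsum_fintype]
    exact Finset.sum_congr rfl fun j _ => ((hCA j).trans (hAeq j)).symm
  rw [Finset.sum_const, Finset.card_univ, Fintype.card_fin, nsmul_eq_mul] at hfin
  have hnz : ((n : ℝ≥0∞) + 1) ≠ 0 := by
    simp
  have hnt : ((n : ℝ≥0∞) + 1) ≠ ⊤ := by
    simp [ENNReal.add_ne_top]
  rw [ENNReal.eq_div_iff hnz hnt]
  rw [show ((n : ℝ≥0∞) + 1) = ((n + 1 : ℕ) : ℝ≥0∞) by push_cast; ring]
  exact hfin
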